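/- Let β > 0 and let (A(t))_{t∈ℕ} be a sequence of n×n row-stochastic matrices such that for every t, A(t) is β-rooted. Then for every s ∈ ℕ there exists a stochastic vector q_s ∈ ℝⁿ such that the backward products Φ(t,s) = A(t)A(t−1)⋯A(s) converge entrywise, as t → ∞, to the rank-one matrix 𝟏 q_sᵀ (the matrix whose i-th row is q_sᵀ for every i). -/

import Mathlib

open Filter

/-- A matrix is row-stochastic if it has nonnegative entries and each row sums to 1. -/
def RowStochastic {n : ℕ} (A : Matrix (Fin n) (Fin n) ℝ) : Prop :=
  (∀ i j, 0 ≤ A i j) ∧ ∀ i, ∑ j, A i j = 1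

/-- A vector is stochastic if its entries are nonnegative and sum to 1. -/
def StochasticVec {n : ℕ} (q : Fin n → ℝ) : Prop :=
  (∀ i, 0 ≤ q i) ∧ ∑ i, q i = 1

/-- A directed graph is rooted if some vertex has a directed path to every other vertex. -/
def Rooted {V : Type*} (E : V → V → Prop) : Prop :=
  ∃ r : V, ∀ v : V, Relation.ReflTransGen E r v

/-- A row-stochastic matrix `A` is `β`-rooted if its diagonal entries are at least `β`
and the directed graph with an edge from `j` to `i` whenever `i ≠ j` and `A i j ≥ β`
is rooted. -/
def BetaRooted {n : ℕ} (β : ℝ) (A : Matrix (Fin n) (Fin n) ℝ) : Prop :=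
  (∀ i, β ≤ A i i) ∧ Rooted (fun j i : Fin n => i ≠ j ∧ β ≤ A i j)

/-- The backward product `Φ(t,s) = A(t) A(t-1) ⋯ A(s)` (for `t ≥ s`). -/
def backProd {n : ℕ} (A : ℕ → Matrix (Fin n) (Fin n) ℝ) (s t : ℕ) :
    Matrix (Fin n) (Fin n) ℝ :=
  (((List.range' s (t + 1 - s)).reverse).map A).prod

namespace Stmt2Aux
open Finset Matrix

variable {n : ℕ}

def Qprod (B : ℕ → Matrix (Fin n) (Fin n) ℝ) : ℕ → Matrix (Fin n) (Fin n) ℝ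
  | 0 => 1
  | (k+1) => B k * Qprod B k

lemma rowStochastic_one : RowStochastic (1 : Matrix (Fin n) (Fin n) ℝ) := by
  constructor
  · intro i j
    by_cases h : i = j <;> simp [Matrix.one_apply, h]
  · intro i
    simp [Matrix.one_apply]

lemma rowStochastic_mul {A B : Matrix (Fin n) (Fin n) ℝ}
    (hA : RowStochastic A) (hB : RowStochastic B) : RowStochastic (A * B) := by
  constructor
  · intro i j
    rw [Matrix.mul_apply]
    exact Finset.sum_nonneg fun k _ => mul_nonneg (hA.1 i k) (hB.1 k j)
  · intro i
    simp only [Matrix.mul_apply]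
    rw [Finset.sum_comm]
    simp_rw [← Finset.mul_sum]
    simp only [hB.2, mul_one]
    exact hA.2 i

lemma rowStochastic_Qprod {B : ℕ → Matrix (Fin n) (Fin n) ℝ}
    (hB : ∀ t, RowStochastic (B t)) : ∀ k, RowStochastic (Qprod B k)
  | 0 => rowStochastic_one
  | (k+1) => rowStochastic_mul (hB k) (rowStochastic_Qprod hB k)

lemma crossing {V : Type*} {E : V → V → Prop} {S : Finset V} [DecidableEq V] {a b : V}
    (h : Relation.ReflTransGen E a b) (ha : a ∈ S) (hb : b ∉ S) :
    ∃ u ∈ S, ∃ v, v ∉ S ∧ E u v := by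
  induction h with
  | refl => exact absurd ha hb
  | @tail c d h' e ih =>
    by_cases hc : c ∈ S
    · exact ⟨c, hc, d, hb, e⟩
    · exact ih hc

variable {β : ℝ} {B : ℕ → Matrix (Fin n) (Fin n) ℝ}

lemma step_mem (hβ : 0 < β) (hst : ∀ t, RowStochastic (B t))
    (k : ℕ) {i j r : Fin n} (hd : β ≤ B k i j) (hq : β ^ k ≤ Qprod B k j r) :
    β ^ (k+1) ≤ Qprod B (k+1) i r := by
  have hQ : ∀ a b, 0 ≤ Qprod B k a b := (rowStochastic_Qprod hst k).1
  have h1 : B k i j * Qprod B k j r ≤ Qprod B (k+1) i r := by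
    show _ ≤ (B k * Qprod B k) i r
    rw [Matrix.mul_apply]
    exact Finset.single_le_sum
      (f := fun j' => B k i j' * Qprod B k j' r)
      (fun j' _ => mul_nonneg ((hst k).1 i j') (hQ j' r)) (Finset.mem_univ j)
  calc β ^ (k+1) = β * β ^ k := by ring
    _ ≤ B k i j * Qprod B k j r :=
        mul_le_mul hd hq (pow_nonneg hβ.le k) (le_trans hβ.le hd)
    _ ≤ _ := h1

open Classical in
lemma card_S_ge (hβ : 0 < β) (hst : ∀ t, RowStochastic (B t))
    (hdiag : ∀ t i, β ≤ B t i i) (ρ : ℕ → Fin n)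
    (hρ : ∀ t v, Relation.ReflTransGen (fun j i => i ≠ j ∧ β ≤ B t i j) (ρ t) v)
    (r : Fin n) : ∀ k : ℕ,
    min n (1 + ((Finset.range k).filter (fun t => ρ t = r)).card)
      ≤ (Finset.univ.filter (fun i => β ^ k ≤ Qprod B k i r)).card := by
  set S : ℕ → Finset (Fin n) :=
    fun k => Finset.univ.filter (fun i => β ^ k ≤ Qprod B k i r) with hS
  have hmemS : ∀ k i, i ∈ S k ↔ β ^ k ≤ Qprod B k i r := by
    intro k i; simp [hS]
  have hrS : ∀ k, r ∈ S k := by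
    intro k
    induction k with
    | zero => simp [hmemS, Qprod, Matrix.one_apply]
    | succ m ih => exact (hmemS _ _).2 (step_mem hβ hst m (hdiag m r) ((hmemS _ _).1 ih))
  have hmono : ∀ k, S k ⊆ S (k+1) := by
    intro k i hi
    exact (hmemS _ _).2 (step_mem hβ hst k (hdiag k i) ((hmemS _ _).1 hi))
  have key : ∀ k : ℕ,
      min n (1 + ((Finset.range k).filter (fun t => ρ t = r)).card) ≤ (S k).card := by
    intro k
    induction k with
    | zero =>
      simp only [Finset.range_zero, Finset.filter_empty, Finset.card_empty]
      have h1 : 0 < (S 0).card := Finset.card_pos.2 ⟨r, hrS 0⟩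
      omega
    | succ k ih =>
      have hcard : ((Finset.range (k+1)).filter (fun t => ρ t = r)).card
          = ((Finset.range k).filter (fun t => ρ t = r)).card
            + (if ρ k = r then 1 else 0) := by
        rw [Finset.range_add_one, Finset.filter_insert]
        split
        · rw [Finset.card_insert_of_notMem (by simp)]
        · rfl
      have hmc : (S k).card ≤ (S (k+1)).card := Finset.card_le_card (hmono k)
      have hcu : (S (k+1)).card ≤ n := by
        have := Finset.card_le_univ (S (k+1))
        simpa using this
      by_cases hρk : ρ k = r
      · by_cases hu : S k = Finset.univ
        · have h3 : (S k).card = n := by rw [hu]; simp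
          omega
        · obtain ⟨v, hv⟩ : ∃ v, v ∉ S k := by
            by_contra h
            push_neg at h
            exact hu (Finset.eq_univ_iff_forall.2 h)
          obtain ⟨u, hu', w, hw, hwu, hβw⟩ :=
            crossing (hρk ▸ hρ k v) (hrS k) hv
          have hwS : w ∈ S (k+1) :=
            (hmemS _ _).2 (step_mem hβ hst k hβw ((hmemS _ _).1 hu'))
          have hins : insert w (S k) ⊆ S (k+1) := by
            intro x hx
            rcases Finset.mem_insert.1 hx with h | h
            · exact h ▸ hwS
            · exact hmono k h
          have h2 : (S k).card + 1 ≤ (S (k+1)).card := by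
            rw [← Finset.card_insert_of_notMem hw]
            exact Finset.card_le_card hins
          rw [hcard, if_pos hρk]
          omega
      · rw [hcard, if_neg hρk]
        omega
  exact key

open Classical in
lemma exists_col (hn : 0 < n) (hβ : 0 < β)
    (hst : ∀ t, RowStochastic (B t)) (hrt : ∀ t, BetaRooted β (B t)) :
    ∃ r : Fin n, ∀ i, β ^ (n * (n-1) + 1) ≤ Qprod B (n * (n-1) + 1) i r := by
  set L := n * (n-1) + 1 with hL
  have hNe : Nonempty (Fin n) := ⟨⟨0, hn⟩⟩
  choose ρ hρ using fun t => (hrt t).2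
  obtain ⟨r, -, hr⟩ := Finset.exists_le_card_fiber_of_mul_le_card_of_maps_to
    (s := Finset.range L) (t := Finset.univ) (f := ρ) (n := n - 1)
    (fun a _ => Finset.mem_univ _) Finset.univ_nonempty
    (by simp only [Finset.card_univ, Fintype.card_fin, Finset.card_range]; omega)
  have hkey := card_S_ge hβ hst (fun t => (hrt t).1) ρ hρ r L
  have hcard : (Finset.univ.filter (fun i => β ^ L ≤ Qprod B L i r)).card = n := by
    have h1 : (Finset.univ.filter (fun i => β ^ L ≤ Qprod B L i r)).card ≤ n := by
      simpa using Finset.card_le_univ (Finset.univ.filter (fun i => β ^ L ≤ Qprod B L i r))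
    have h2 : min n (1 + ((Finset.range L).filter (fun t => ρ t = r)).card) = n := by
      omega
    omega
  have huniv : (Finset.univ.filter (fun i => β ^ L ≤ Qprod B L i r)) = Finset.univ :=
    Finset.eq_univ_of_card _ (by rw [hcard, Fintype.card_fin])
  refine ⟨r, fun i => ?_⟩
  rw [Finset.eq_univ_iff_forall] at huniv
  exact (Finset.mem_filter.1 (huniv i)).2

lemma Qprod_add (B : ℕ → Matrix (Fin n) (Fin n) ℝ) (t : ℕ) :
    ∀ l, Qprod B (t + l) = Qprod (fun u => B (t + u)) l * Qprod B t
  | 0 => by simp [Qprod]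
  | (l+1) => by
    show Qprod B (t + l + 1) = _
    rw [Qprod, Qprod_add B t l]
    simp [Qprod, Matrix.mul_assoc]

lemma mulVec_le_sup' (hne : (Finset.univ : Finset (Fin n)).Nonempty)
    {A : Matrix (Fin n) (Fin n) ℝ} (hA : RowStochastic A) (x : Fin n → ℝ) (i : Fin n) :
    A.mulVec x i ≤ Finset.univ.sup' hne x := by
  have h0 : A.mulVec x i = ∑ j, A i j * x j := rfl
  rw [h0]
  calc ∑ j, A i j * x j ≤ ∑ j, A i j * Finset.univ.sup' hne x :=
        Finset.sum_le_sum fun j _ =>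
          mul_le_mul_of_nonneg_left (Finset.le_sup' x (Finset.mem_univ j)) (hA.1 i j)
    _ = Finset.univ.sup' hne x := by rw [← Finset.sum_mul, hA.2 i, one_mul]

lemma inf'_le_mulVec (hne : (Finset.univ : Finset (Fin n)).Nonempty)
    {A : Matrix (Fin n) (Fin n) ℝ} (hA : RowStochastic A) (x : Fin n → ℝ) (i : Fin n) :
    Finset.univ.inf' hne x ≤ A.mulVec x i := by
  have h0 : A.mulVec x i = ∑ j, A i j * x j := rfl
  rw [h0]
  calc Finset.univ.inf' hne x = ∑ j, A i j * Finset.univ.inf' hne x := by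
        rw [← Finset.sum_mul, hA.2 i, one_mul]
    _ ≤ ∑ j, A i j * x j :=
        Finset.sum_le_sum fun j _ =>
          mul_le_mul_of_nonneg_left (Finset.inf'_le x (Finset.mem_univ j)) (hA.1 i j)

lemma osc_contract (hne : (Finset.univ : Finset (Fin n)).Nonempty)
    {P : Matrix (Fin n) (Fin n) ℝ} (hP : RowStochastic P)
    {γ : ℝ} (hγ0 : 0 ≤ γ) (r : Fin n) (hcol : ∀ i, γ ≤ P i r) (x : Fin n → ℝ) :
    Finset.univ.sup' hne (P.mulVec x) - Finset.univ.inf' hne (P.mulVec x)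
      ≤ (1 - γ) * (Finset.univ.sup' hne x - Finset.univ.inf' hne x) := by
  set M := Finset.univ.sup' hne x with hM
  set m := Finset.univ.inf' hne x with hm
  have hxM : ∀ j, x j ≤ M := fun j => Finset.le_sup' x (Finset.mem_univ j)
  have hmx : ∀ j, m ≤ x j := fun j => Finset.inf'_le x (Finset.mem_univ j)
  have hrest : ∀ i, ∑ j ∈ Finset.univ \ {r}, P i j = 1 - P i r := by
    intro i
    have h1 := Finset.sum_eq_sum_sdiff_singleton_add (Finset.mem_univ r) (fun j => P i j)
    have h2 := hP.2 i
    linarith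
  have hsplit : ∀ i, P.mulVec x i
      = ∑ j ∈ Finset.univ \ {r}, P i j * x j + P i r * x r := by
    intro i
    exact Finset.sum_eq_sum_sdiff_singleton_add (Finset.mem_univ r) (fun j => P i j * x j)
  have hup : ∀ i, P.mulVec x i ≤ M - γ * (M - x r) := by
    intro i
    have h1 : ∑ j ∈ Finset.univ \ {r}, P i j * x j ≤ (1 - P i r) * M := by
      calc ∑ j ∈ Finset.univ \ {r}, P i j * x j
          ≤ ∑ j ∈ Finset.univ \ {r}, P i j * M :=
            Finset.sum_le_sum fun j _ => mul_le_mul_of_nonneg_left (hxM j) (hP.1 i j)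
        _ = (1 - P i r) * M := by rw [← Finset.sum_mul, hrest i]
    have h2 : (P i r - γ) * (M - x r) ≥ 0 :=
      mul_nonneg (sub_nonneg.2 (hcol i)) (sub_nonneg.2 (hxM r))
    have h3 := hsplit i
    nlinarith
  have hlo : ∀ i, m + γ * (x r - m) ≤ P.mulVec x i := by
    intro i
    have h1 : (1 - P i r) * m ≤ ∑ j ∈ Finset.univ \ {r}, P i j * x j := by
      calc (1 - P i r) * m = ∑ j ∈ Finset.univ \ {r}, P i j * m := by
            rw [← Finset.sum_mul, hrest i]
        _ ≤ ∑ j ∈ Finset.univ \ {r}, P i j * x j :=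
            Finset.sum_le_sum fun j _ => mul_le_mul_of_nonneg_left (hmx j) (hP.1 i j)
    have h2 : (P i r - γ) * (x r - m) ≥ 0 :=
      mul_nonneg (sub_nonneg.2 (hcol i)) (sub_nonneg.2 (hmx r))
    have h3 := hsplit i
    nlinarith
  have h1 : Finset.univ.sup' hne (P.mulVec x) ≤ M - γ * (M - x r) :=
    Finset.sup'_le hne _ fun i _ => hup i
  have h2 : m + γ * (x r - m) ≤ Finset.univ.inf' hne (P.mulVec x) :=
    Finset.le_inf' hne _ fun i _ => hlo i
  nlinarith

lemma entry_tendsto (hn : 0 < n) (hβ : 0 < β) (hβ1 : β ≤ 1)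
    (hst : ∀ t, RowStochastic (B t)) (hrt : ∀ t, BetaRooted β (B t)) (x : Fin n → ℝ) :
    ∃ c : ℝ, ∀ i, Tendsto (fun t => (Qprod B t).mulVec x i) atTop (nhds c) := by
  have hne : (Finset.univ : Finset (Fin n)).Nonempty := ⟨⟨0, hn⟩, Finset.mem_univ _⟩
  set L := n * (n-1) + 1 with hL
  have hLpos : 0 < L := Nat.succ_pos _
  set γ := β ^ L with hγ
  have hγ0 : 0 < γ := pow_pos hβ L
  have hγ1 : γ ≤ 1 := pow_le_one₀ hβ.le hβ1
  set y : ℕ → Fin n → ℝ := fun t => (Qprod B t).mulVec x with hy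
  set Ms : ℕ → ℝ := fun t => Finset.univ.sup' hne (y t) with hMs
  set ms : ℕ → ℝ := fun t => Finset.univ.inf' hne (y t) with hms
  have hstep : ∀ t, y (t+1) = (B t).mulVec (y t) := by
    intro t
    show (Qprod B (t+1)).mulVec x = _
    rw [hy]
    show (B t * Qprod B t).mulVec x = _
    rw [← Matrix.mulVec_mulVec]
  have hManti : Antitone Ms := antitone_nat_of_succ_le (fun t => by
    show Finset.univ.sup' hne (y (t+1)) ≤ Finset.univ.sup' hne (y t)
    rw [hstep t]
    exact Finset.sup'_le hne _ fun i _ => mulVec_le_sup' hne (hst t) (y t) i)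
  have hmmono : Monotone ms := monotone_nat_of_le_succ (fun t => by
    show Finset.univ.inf' hne (y t) ≤ Finset.univ.inf' hne (y (t+1))
    rw [hstep t]
    exact Finset.le_inf' hne _ fun i _ => inf'_le_mulVec hne (hst t) (y t) i)
  have hd : ∀ t, ms t ≤ Ms t := fun t =>
    le_trans (Finset.inf'_le (y t) (Finset.mem_univ ⟨0, hn⟩))
      (Finset.le_sup' (y t) (Finset.mem_univ ⟨0, hn⟩))
  have hwin : ∀ t, Ms (t + L) - ms (t + L) ≤ (1 - γ) * (Ms t - ms t) := by
    intro t
    obtain ⟨r, hr⟩ := exists_col (B := fun u => B (t + u)) hn hβ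
      (fun u => hst (t + u)) (fun u => hrt (t + u))
    have hyw : y (t + L) = (Qprod (fun u => B (t + u)) L).mulVec (y t) := by
      rw [hy]
      show (Qprod B (t + L)).mulVec x = _
      rw [Qprod_add, ← Matrix.mulVec_mulVec]
    show Finset.univ.sup' hne (y (t+L)) - Finset.univ.inf' hne (y (t+L)) ≤ _
    rw [hyw]
    exact osc_contract hne (rowStochastic_Qprod (fun u => hst (t + u)) L)
      hγ0.le r hr (y t)
  have hgeo : ∀ k : ℕ, Ms (k * L) - ms (k * L) ≤ (1 - γ) ^ k * (Ms 0 - ms 0) := by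
    intro k
    induction k with
    | zero => simp
    | succ k ih =>
      have h1 : (k+1) * L = k * L + L := by ring
      rw [h1]
      calc Ms (k * L + L) - ms (k * L + L) ≤ (1 - γ) * (Ms (k * L) - ms (k * L)) :=
            hwin (k * L)
        _ ≤ (1 - γ) * ((1 - γ) ^ k * (Ms 0 - ms 0)) :=
            mul_le_mul_of_nonneg_left ih (by linarith)
        _ = (1 - γ) ^ (k+1) * (Ms 0 - ms 0) := by ring
  have hosc_anti : Antitone (fun t => Ms t - ms t) := fun a b hab =>
    sub_le_sub (hManti hab) (hmmono hab)
  have hbound : ∀ t, Ms t - ms t ≤ (1 - γ) ^ (t / L) * (Ms 0 - ms 0) := by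
    intro t
    calc Ms t - ms t ≤ Ms (t / L * L) - ms (t / L * L) :=
          hosc_anti (Nat.div_mul_le_self t L)
      _ ≤ (1 - γ) ^ (t / L) * (Ms 0 - ms 0) := hgeo (t / L)
  have hdiv : Tendsto (fun t : ℕ => t / L) atTop atTop :=
    Filter.tendsto_atTop_atTop.2 fun b =>
      ⟨b * L, fun t ht => (Nat.le_div_iff_mul_le hLpos).2 ht⟩
  have hpow0 : Tendsto (fun k : ℕ => (1 - γ) ^ k) atTop (nhds 0) :=
    tendsto_pow_atTop_nhds_zero_of_lt_one (by linarith) (by linarith)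
  have hub : Tendsto (fun t => (1 - γ) ^ (t / L) * (Ms 0 - ms 0)) atTop (nhds 0) := by
    simpa using (hpow0.comp hdiv).mul_const (Ms 0 - ms 0)
  have hosc0 : Tendsto (fun t => Ms t - ms t) atTop (nhds 0) :=
    tendsto_of_tendsto_of_tendsto_of_le_of_le tendsto_const_nhds hub
      (fun t => sub_nonneg.2 (hd t)) hbound
  have hbdd : BddBelow (Set.range Ms) := ⟨ms 0, by
    rintro z ⟨t, rfl⟩
    exact le_trans (hmmono (Nat.zero_le t)) (hd t)⟩
  have hbdd2 : BddAbove (Set.range ms) := ⟨Ms 0, by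
    rintro z ⟨t, rfl⟩
    exact le_trans (hd t) (hManti (Nat.zero_le t))⟩
  have hMc : Tendsto Ms atTop (nhds (⨅ t, Ms t)) := tendsto_atTop_ciInf hManti hbdd
  have hmc : Tendsto ms atTop (nhds (⨆ t, ms t)) := tendsto_atTop_ciSup hmmono hbdd2
  have heq : (⨅ t, Ms t) = (⨆ t, ms t) := by
    have h1 : Tendsto (fun t => Ms t - ms t) atTop (nhds ((⨅ t, Ms t) - (⨆ t, ms t))) :=
      hMc.sub hmc
    have h2 := tendsto_nhds_unique h1 hosc0
    linarith
  refine ⟨⨅ t, Ms t, fun i => ?_⟩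
  exact tendsto_of_tendsto_of_tendsto_of_le_of_le (g := ms) (h := Ms)
    (f := fun t => y t i)
    (heq ▸ hmc) hMc (fun t => Finset.inf'_le (y t) (Finset.mem_univ i))
    (fun t => Finset.le_sup' (y t) (Finset.mem_univ i))

lemma backProd_eq (A : ℕ → Matrix (Fin n) (Fin n) ℝ) (s : ℕ) (m : ℕ) :
    backProd A s (s + m) = Qprod (fun u => A (s + u)) (m + 1) := by
  induction m with
  | zero =>
    show (((List.range' s (s + 0 + 1 - s)).reverse).map A).prod = _
    have h0 : s + 0 + 1 - s = 1 := by omega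
    rw [h0]
    simp [Qprod, List.range']
  | succ m ih =>
    show (((List.range' s (s + (m+1) + 1 - s)).reverse).map A).prod = _
    have h1 : s + (m + 1) + 1 - s = (m + 1) + 1 := by omega
    have h2 : s + m + 1 - s = m + 1 := by omega
    have ih' : ((List.range' s (m+1)).reverse.map A).prod
        = Qprod (fun u => A (s + u)) (m + 1) := by
      have := ih
      unfold backProd at this
      rw [h2] at this
      exact this
    rw [h1, List.range'_concat]
    simp only [List.reverse_append, List.reverse_singleton, List.singleton_append,
      List.map_cons, List.prod_cons]
    rw [ih']
    show A (s + 1 * (m + 1)) * _ = _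
    rw [one_mul]
    rfl

end Stmt2Aux


/-- For a sequence of `β`-rooted row-stochastic matrices, the backward products
`Φ(t,s)` converge entrywise, as `t → ∞`, to a rank-one matrix `𝟏 qₛᵀ` with `qₛ`
stochastic. -/
theorem stmt2 {n : ℕ} (β : ℝ) (hβ : 0 < β) (A : ℕ → Matrix (Fin n) (Fin n) ℝ)
    (hstoch : ∀ t, RowStochastic (A t)) (hrooted : ∀ t, BetaRooted β (A t)) :
    ∀ s : ℕ, ∃ q : Fin n → ℝ, StochasticVec q ∧
      ∀ i j, Tendsto (fun t => backProd A s t i j) atTop (nhds (q j)) := by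
  rcases Nat.eq_zero_or_pos n with h0 | hn
  · subst h0
    obtain ⟨r, -⟩ := (hrooted 0).2
    exact r.elim0
  intro s
  have hβ1 : β ≤ 1 := by
    have h1 := (hrooted 0).1 ⟨0, hn⟩
    have h2 : A 0 ⟨0, hn⟩ ⟨0, hn⟩ ≤ ∑ j, A 0 ⟨0, hn⟩ j :=
      Finset.single_le_sum (fun j _ => (hstoch 0).1 _ j) (Finset.mem_univ _)
    rw [(hstoch 0).2 ⟨0, hn⟩] at h2
    linarith
  set B : ℕ → Matrix (Fin n) (Fin n) ℝ := fun u => A (s + u) with hB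
  have hstB : ∀ t, RowStochastic (B t) := fun t => hstoch _
  have hrtB : ∀ t, BetaRooted β (B t) := fun t => hrooted _
  have hconv : ∀ j : Fin n, ∃ c, ∀ i,
      Tendsto (fun t => Stmt2Aux.Qprod B t i j) atTop (nhds c) := by
    intro j
    obtain ⟨c, hc⟩ := Stmt2Aux.entry_tendsto hn hβ hβ1 hstB hrtB (Pi.single j 1)
    refine ⟨c, fun i => ?_⟩
    have h2 := hc i
    simp only [Matrix.mulVec_single_one, Matrix.col_apply] at h2
    exact h2
  choose q hq using hconv
  have hQs := Stmt2Aux.rowStochastic_Qprod hstB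
  refine ⟨q, ⟨?_, ?_⟩, ?_⟩
  · intro j
    exact ge_of_tendsto' (hq j ⟨0, hn⟩) (fun t => (hQs t).1 ⟨0, hn⟩ j)
  · have h1 : Tendsto (fun t => ∑ j, Stmt2Aux.Qprod B t ⟨0, hn⟩ j) atTop
        (nhds (∑ j, q j)) := tendsto_finset_sum _ (fun j _ => hq j ⟨0, hn⟩)
    have h2 : (fun t => ∑ j, Stmt2Aux.Qprod B t ⟨0, hn⟩ j) = fun _ => (1:ℝ) :=
      funext fun t => (hQs t).2 _
    rw [h2] at h1
    exact tendsto_nhds_unique h1 tendsto_const_nhds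
  · intro i j
    refine (Filter.tendsto_add_atTop_iff_nat s).1 ?_
    have hfun : (fun m => backProd A s (m + s) i j)
        = fun m => Stmt2Aux.Qprod B (m+1) i j := by
      funext m
      rw [add_comm m s, Stmt2Aux.backProd_eq]
    rw [hfun]
    exact (Filter.tendsto_add_atTop_iff_nat 1).2 (hq j i)
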